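/- Let 2^k ≤ n < 2^{k+1} and let 0 = x_0 < x_1 < ... < x_n < 1 be the sorted first n van der Corput points in base 2 together with 0. Suppose x_t = a/2^{k+1} with a odd. Then for every r ≥ 1 with t + r ≤ n, we have x_{t+r} − x_t ≥ x_{t−1+r} − x_{t−1}. -/

import Mathlib

noncomputable def vdc (m : ℕ) : ℝ :=
  ∑ j ∈ Finset.range m, if m.testBit j then (1 : ℝ) / 2 ^ (j + 1) else 0

lemma vdc_eq (m N : ℕ) (h : m ≤ N) :
    vdc m = ∑ j ∈ Finset.range N, if m.testBit j then (1:ℝ)/2^(j+1) else 0 := by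
  unfold vdc
  apply Finset.sum_subset (Finset.range_subset_range.2 h)
  intro j hj hjm
  simp only [Finset.mem_range, not_lt] at hjm
  rw [Nat.testBit_eq_false_of_lt]
  · simp
  · exact lt_of_le_of_lt hjm (Nat.lt_two_pow_self (n := j))

lemma vdc_rec (q b : ℕ) (hb : b ≤ 1) :
    vdc (2 * q + b) = ((b : ℝ) + vdc q) / 2 := by
  rw [vdc_eq (2*q+b) (2*q+1+1) (by omega), vdc_eq q (2*q+1) (by omega),
    Finset.sum_range_succ']
  have hbit0 : (2*q+b).testBit 0 = decide (b = 1) := by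
    rcases Nat.le_one_iff_eq_zero_or_eq_one.1 hb with h | h <;> subst h <;>
      simp [Nat.testBit_zero, Nat.add_mul_mod_self_left, Nat.mul_add_mod]
  have hbit : ∀ j, (2*q+b).testBit (j+1) = q.testBit j := by
    intro j
    rw [Nat.testBit_add_one]
    congr 1
    omega
  rw [hbit0]
  simp only [hbit]
  rw [add_div, Finset.sum_div, add_comm]
  congr 1
  · rcases Nat.le_one_iff_eq_zero_or_eq_one.1 hb with h | h <;> subst h <;> norm_num
  · apply Finset.sum_congr rfl
    intro j _
    split <;> ring

lemma vdc_zero : vdc 0 = 0 := by simp [vdc]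

lemma vdc_num : ∀ K m, m < 2^K → ∃ j : ℕ, vdc m = (j:ℝ) / 2^K := by
  intro K
  induction K with
  | zero => intro m hm; interval_cases m; exact ⟨0, by simp [vdc_zero]⟩
  | succ K ih =>
    intro m hm
    obtain ⟨j, hj⟩ := ih (m / 2) (by omega)
    refine ⟨(m % 2) * 2^K + j, ?_⟩
    have hrec := vdc_rec (m / 2) (m % 2) (by omega)
    rw [(by omega : 2 * (m / 2) + m % 2 = m)] at hrec
    rw [hrec, hj]
    have h2 : (2:ℝ)^K ≠ 0 := by positivity
    push_cast
    rw [pow_succ]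
    field_simp
    try ring

lemma vdc_surj : ∀ K (j : ℕ), j < 2^K → ∃ m, m < 2^K ∧ vdc m = (j:ℝ) / 2^K := by
  intro K
  induction K with
  | zero => intro j hj; interval_cases j; exact ⟨0, by norm_num, by simp [vdc_zero]⟩
  | succ K ih =>
    intro j hj
    have h2 : (2:ℝ)^K ≠ 0 := by positivity
    by_cases hjK : j < 2^K
    · obtain ⟨m, hm, hvm⟩ := ih j hjK
      refine ⟨2*m, by omega, ?_⟩
      have := vdc_rec m 0 (by omega)
      rw [add_zero] at this
      rw [this, hvm]
      push_cast
      rw [pow_succ]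
      field_simp
      try ring
    · obtain ⟨m, hm, hvm⟩ := ih (j - 2^K) (by omega)
      refine ⟨2*m+1, by omega, ?_⟩
      rw [vdc_rec m 1 le_rfl, hvm]
      have : ((j : ℝ)) = (j - 2^K : ℕ) + 2^K := by
        push_cast [Nat.cast_sub (by omega : 2^K ≤ j)]; ring
      rw [this]
      push_cast
      rw [pow_succ]
      field_simp
      try ring

theorem stmt_12 (k n : ℕ) (h1 : 2 ^ k ≤ n) (h2 : n < 2 ^ (k + 1)) (x : ℕ → ℝ)
    (hx0 : x 0 = 0)
    (hmono : ∀ i j, i < j → j ≤ n → x i < x j)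
    (hlt1 : x n < 1)
    (himg : ∀ y : ℝ, (∃ i, i ≤ n ∧ x i = y) ↔
      (y = 0 ∨ ∃ m, 1 ≤ m ∧ m ≤ n ∧ vdc m = y))
    (t : ℕ) (ht : 1 ≤ t) (a : ℕ) (ha : Odd a)
    (hxt : x t = (a : ℝ) / 2 ^ (k + 1)) :
    ∀ r, 1 ≤ r → t + r ≤ n →
      x (t + r) - x t ≥ x (t - 1 + r) - x (t - 1) := by
  intro r hr hrn
  obtain ⟨s, rfl⟩ : ∃ s, t = s + 1 := ⟨t - 1, by omega⟩
  simp only [Nat.add_sub_cancel]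
  have hD : (0:ℝ) < 2 ^ (k+1) := by positivity
  have hmono' : ∀ i j, i ≤ j → j ≤ n → x i ≤ x j := by
    intro i j hij hj
    rcases eq_or_lt_of_le hij with h | h
    · rw [h]
    · exact (hmono i j h hj).le
  -- a < 2^(k+1)
  have hxlt1 : x (s+1) < 1 := lt_of_le_of_lt (hmono' (s+1) n (by omega) le_rfl) hlt1
  have haK : a < 2 ^ (k+1) := by
    by_contra h
    push_neg at h
    have : (1:ℝ) ≤ (a:ℝ) / 2^(k+1) := by
      rw [le_div_iff₀ hD]
      exact_mod_cast by simpa using h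
    rw [hxt] at hxlt1
    linarith
  obtain ⟨b, hab⟩ := ha
  have hbk : b < 2 ^ k := by
    have : 2 ^ (k+1) = 2 * 2 ^ k := by ring
    omega
  -- previous grid point 2b/2^(k+1) is among the x's
  have hprev : ∃ i, i ≤ n ∧ x i = (2*b : ℝ) / 2^(k+1) := by
    by_cases hb0 : b = 0
    · exact ⟨0, by omega, by simp [hx0, hb0]⟩
    · obtain ⟨m, hm, hvm⟩ := vdc_surj k b hbk
      have hm1 : 1 ≤ m := by
        rcases Nat.eq_zero_or_pos m with h | h
        · exfalso
          rw [h, vdc_zero] at hvm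
          have : (0:ℝ) < (b:ℝ) / 2^k := by
            apply div_pos _ (by positivity)
            exact_mod_cast Nat.pos_of_ne_zero hb0
          rw [← hvm] at this
          exact lt_irrefl _ this
        · exact h
      obtain ⟨i, hi, hxi⟩ := (himg ((b:ℝ)/2^k)).2 (Or.inr ⟨m, hm1, by omega, hvm⟩)
      refine ⟨i, hi, ?_⟩
      rw [hxi, pow_succ]
      push_cast
      field_simp
  obtain ⟨i, hin, hxi⟩ := hprev
  have hxi_lt : x i < x (s+1) := by
    rw [hxi, hxt, hab]
    have hnum : (2*b : ℝ) < ((2*b+1 : ℕ) : ℝ) := by push_cast; linarith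
    exact div_lt_div_of_pos_right hnum hD
  have hit : i < s + 1 := by
    by_contra h
    push_neg at h
    rcases eq_or_lt_of_le h with h | h
    · rw [h] at hxi_lt; exact lt_irrefl _ hxi_lt
    · exact absurd (hmono _ _ h hin) (not_lt.2 hxi_lt.le)
  have hxs : x i ≤ x s := hmono' i s (by omega) (by omega)
  have gap_t : x (s+1) - x s ≤ 1 / 2^(k+1) := by
    have hgap : x (s+1) - x i = 1 / 2^(k+1) := by
      rw [hxi, hxt, hab, div_sub_div_same]
      congr 1
      push_cast
      ring
    linarith
  -- every point is a multiple of 1/2^(k+1)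
  have hpoint : ∀ i, i ≤ n → ∃ j : ℕ, x i = (j:ℝ) / 2^(k+1) := by
    intro i hi
    rcases (himg (x i)).1 ⟨i, hi, rfl⟩ with h0 | ⟨m, _, hmn, hvm⟩
    · exact ⟨0, by simp [h0]⟩
    · obtain ⟨j, hj⟩ := vdc_num (k+1) m (by omega)
      exact ⟨j, by rw [← hvm, hj]⟩
  obtain ⟨j1, hj1⟩ := hpoint (s+1+r) (by omega)
  obtain ⟨j2, hj2⟩ := hpoint (s+r) (by omega)
  have hlt : x (s+r) < x (s+1+r) := hmono _ _ (by omega) (by omega)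
  have hjj : j2 < j1 := by
    rw [hj1, hj2] at hlt
    have : (j2:ℝ) < (j1:ℝ) := by
      rw [div_lt_div_iff₀ hD hD] at hlt
      exact lt_of_mul_lt_mul_right hlt hD.le
    exact_mod_cast this
  have gap_tr : x (s+1+r) - x (s+r) ≥ 1 / 2^(k+1) := by
    rw [hj1, hj2, div_sub_div_same, ge_iff_le]
    have h1 : (1:ℝ) ≤ (j1:ℝ) - (j2:ℝ) := by
      have : (j2:ℝ) + 1 ≤ (j1:ℝ) := by exact_mod_cast hjj
      linarith
    gcongr
  linarith
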